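/- Let y_1, …, y_{N−1} solve the periodic semi-discrete FtL system, let k ∈ ℝ, let j ∈ {1,…,N−1}, and let t > 0 be a time with y_j(t) ≠ k. Then the function s ↦ (y_j(s) − k)^− is differentiable at t and its derivative at t is at most (1/ℓ)[−H(k − y_{j+1}(t))(V(y_{j+1}(t)) − V(k)) + H(k − y_j(t))(V(y_j(t)) − V(k))]. -/
import Mathlib


/-- `y j`, `j = 1, …, N-1`, solves the periodic semi-discrete Follow-the-Leader
system `ẏ_j(t) = (1/ℓ)(V(y_{j+1}(t)) − V(y_j(t)))` on `[0, ∞)`, with the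
periodic convention `y_N := y_1`. -/
def IsFtLSolution (N : ℕ) (ℓ : ℝ) (V : ℝ → ℝ) (y : ℕ → ℝ → ℝ) : Prop :=
  (∀ t : ℝ, y N t = y 1 t) ∧
  ∀ j ∈ Finset.Icc 1 (N - 1), ∀ t ∈ Set.Ici (0 : ℝ),
    HasDerivWithinAt (y j) (1 / ℓ * (V (y (j + 1) t) - V (y j t))) (Set.Ici (0 : ℝ)) t

/-- The Heaviside function: `H(r) = 0` for `r ≤ 0` and `H(r) = 1` for `r > 0`. -/
noncomputable def heaviside (r : ℝ) : ℝ := if 0 < r then 1 else 0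

/-- If `y` solves the periodic semi-discrete FtL system, `k ∈ ℝ`,
`j ∈ {1,…,N−1}` and `t > 0` with `y_j(t) ≠ k`, then `s ↦ (y_j(s) − k)⁻` is
differentiable at `t` with derivative at most
`(1/ℓ)[−H(k − y_{j+1}(t))(V(y_{j+1}(t)) − V(k)) + H(k − y_j(t))(V(y_j(t)) − V(k))]`. -/
theorem ftl_negative_part_entropy_inequality
    (N : ℕ) (hN : 2 ≤ N) (ℓ : ℝ) (hℓ : 0 < ℓ)
    (V : ℝ → ℝ) (LV : NNReal) (hVlip : LipschitzWith LV V) (hVmono : Monotone V)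
    (y : ℕ → ℝ → ℝ) (hy : IsFtLSolution N ℓ V y)
    (k : ℝ) (j : ℕ) (hj : j ∈ Finset.Icc 1 (N - 1))
    (t : ℝ) (ht : 0 < t) (hne : y j t ≠ k) :
    ∃ d : ℝ, HasDerivAt (fun s => -min (y j s - k) 0) d t ∧
      d ≤ 1 / ℓ * (-(heaviside (k - y (j + 1) t) * (V (y (j + 1) t) - V k))
            + heaviside (k - y j t) * (V (y j t) - V k)) := by
  obtain ⟨hper, hode⟩ := hy
  have hIci : Set.Ici (0 : ℝ) ∈ nhds t := Ici_mem_nhds ht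
  have hd : HasDerivAt (y j) (1 / ℓ * (V (y (j + 1) t) - V (y j t))) t :=
    (hode j hj t (le_of_lt ht)).hasDerivAt hIci
  have hc : ContinuousAt (y j) t := hd.continuousAt
  have hℓinv : (0 : ℝ) ≤ 1 / ℓ := by positivity
  rcases lt_or_gt_of_ne hne with hlt | hgt
  · -- y j t < k
    refine ⟨-(1 / ℓ * (V (y (j + 1) t) - V (y j t))), ?_, ?_⟩
    · have hev : ∀ᶠ s in nhds t, y j s < k :=
        hc.eventually_lt continuousAt_const hlt
      have hev' : (fun s => -min (y j s - k) 0) =ᶠ[nhds t] fun s => -(y j s - k) := by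
        filter_upwards [hev] with s hs
        rw [min_eq_left (by linarith)]
      exact HasDerivAt.congr_of_eventuallyEq ((hd.sub_const k).neg) hev'
    · have h1 : heaviside (k - y j t) = 1 := by
        simp [heaviside, sub_pos.mpr hlt]
      rw [h1, one_mul]
      by_cases h2 : 0 < k - y (j + 1) t
      · have : heaviside (k - y (j + 1) t) = 1 := by simp [heaviside, h2]
        rw [this, one_mul]; ring_nf; rfl
      · have : heaviside (k - y (j + 1) t) = 0 := by simp [heaviside, h2]
        rw [this, zero_mul, neg_zero, zero_add]
        have hVk : V k ≤ V (y (j + 1) t) := hVmono (by linarith [not_lt.mp h2])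
        have : -(1 / ℓ * (V (y (j + 1) t) - V (y j t)))
            = 1 / ℓ * (V (y j t) - V (y (j + 1) t)) := by ring
        rw [this]
        exact mul_le_mul_of_nonneg_left (by linarith) hℓinv
  · -- y j t > k
    refine ⟨0, ?_, ?_⟩
    · have hev : ∀ᶠ s in nhds t, k < y j s :=
        continuousAt_const.eventually_lt hc hgt
      have hev' : (fun s => -min (y j s - k) 0) =ᶠ[nhds t] fun _ => (0 : ℝ) := by
        filter_upwards [hev] with s hs
        rw [min_eq_right (by linarith)]; simp
      exact HasDerivAt.congr_of_eventuallyEq (hasDerivAt_const t 0) hev'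
    · have h1 : heaviside (k - y j t) = 0 := by
        simp [heaviside]; linarith
      rw [h1, zero_mul, add_zero]
      by_cases h2 : 0 < k - y (j + 1) t
      · have : heaviside (k - y (j + 1) t) = 1 := by simp [heaviside, h2]
        rw [this, one_mul]
        have hVk : V (y (j + 1) t) ≤ V k := hVmono (by linarith)
        have : -(V (y (j + 1) t) - V k) = V k - V (y (j + 1) t) := by ring
        rw [this]
        exact mul_nonneg hℓinv (by linarith)
      · have : heaviside (k - y (j + 1) t) = 0 := by simp [heaviside, h2]
        rw [this, zero_mul, neg_zero, mul_zero]
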